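/- arXiv:2209.07415 — 2 statements merged into one kernel-verified Lean document; each statement's English description precedes it below -/
import Mathlib

section
/- Let F: ℝ → [0,1] be a continuous distribution function and let X be a random variable with distribution function F. Then F(X) is uniformly distributed on [0,1]. -/
open MeasureTheory Set Filter Topology

/-- Probability integral transform: if `X` has continuous distribution function `F`,
then `F(X)` is uniformly distributed on `[0,1]`. -/
theorem probability_integral_transform {Ω : Type*} [MeasurableSpace Ω] (P : Measure Ω)
    [IsProbabilityMeasure P] (X : Ω → ℝ) (hX : Measurable X)
    (F : ℝ → ℝ) (hF : Continuous F)
    (hcdf : ∀ x, F x = (P {ω | X ω ≤ x}).toReal) :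
    Measure.map (fun ω => F (X ω)) P = volume.restrict (Set.Icc (0 : ℝ) 1) := by
  have hFX : Measurable fun ω => F (X ω) := hF.measurable.comp hX
  set μ := P.map X with hμ
  have hμprob : IsProbabilityMeasure μ := Measure.isProbabilityMeasure_map hX.aemeasurable
  have hFcdf : F = ProbabilityTheory.cdf μ := by
    funext x
    rw [ProbabilityTheory.cdf_eq_real, measureReal_def, hμ, Measure.map_apply hX measurableSet_Iic, hcdf]
    rfl
  have hmono : Monotone F := hFcdf ▸ ProbabilityTheory.monotone_cdf μ
  have hF0 : ∀ x, 0 ≤ F x := fun x => hFcdf ▸ ProbabilityTheory.cdf_nonneg μ x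
  have hF1 : ∀ x, F x ≤ 1 := fun x => hFcdf ▸ ProbabilityTheory.cdf_le_one μ x
  have hbot : Tendsto F atBot (𝓝 0) := hFcdf ▸ ProbabilityTheory.tendsto_cdf_atBot μ
  have htop : Tendsto F atTop (𝓝 1) := hFcdf ▸ ProbabilityTheory.tendsto_cdf_atTop μ
  have hmap : IsFiniteMeasure (Measure.map (fun ω => F (X ω)) P) := by
    have : IsProbabilityMeasure (Measure.map (fun ω => F (X ω)) P) :=
      Measure.isProbabilityMeasure_map hFX.aemeasurable
    infer_instance
  refine Measure.ext_of_Iic _ _ fun t => ?_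
  rw [Measure.map_apply hFX measurableSet_Iic, Measure.restrict_apply measurableSet_Iic]
  have hpre : (fun ω => F (X ω)) ⁻¹' Iic t = X ⁻¹' (F ⁻¹' Iic t) := rfl
  rcases lt_or_ge t 0 with ht0 | ht0
  · -- t < 0 : both sides 0
    have h1 : (fun ω => F (X ω)) ⁻¹' Iic t = ∅ := by
      ext ω; simp only [mem_preimage, mem_Iic, mem_empty_iff_false, iff_false, not_le]
      exact lt_of_lt_of_le ht0 (hF0 _)
    have h2 : Iic t ∩ Icc (0:ℝ) 1 = ∅ := by
      ext x; simp only [mem_inter_iff, mem_Iic, mem_Icc, mem_empty_iff_false, iff_false]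
      rintro ⟨h1, h2, -⟩; linarith
    rw [h1, h2]; simp
  rcases le_or_gt 1 t with ht1 | ht1
  · -- t ≥ 1 : both sides 1
    have h1 : (fun ω => F (X ω)) ⁻¹' Iic t = univ := by
      ext ω; simp only [mem_preimage, mem_Iic, mem_univ, iff_true]
      exact le_trans (hF1 _) ht1
    have h2 : Iic t ∩ Icc (0:ℝ) 1 = Icc 0 1 := by
      ext x; simp only [mem_inter_iff, mem_Iic, mem_Icc]
      constructor
      · rintro ⟨-, h⟩; exact h
      · rintro ⟨h0, h1'⟩; exact ⟨le_trans h1' ht1, h0, h1'⟩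
    rw [h1, h2, measure_univ, Real.volume_Icc]
    norm_num
  · -- 0 ≤ t < 1
    have h2 : Iic t ∩ Icc (0:ℝ) 1 = Icc 0 t := by
      ext x; simp only [mem_inter_iff, mem_Iic, mem_Icc]
      constructor
      · rintro ⟨h, h0, -⟩; exact ⟨h0, h⟩
      · rintro ⟨h0, h⟩; exact ⟨h, h0, le_trans h ht1.le⟩
    rw [h2, Real.volume_Icc, sub_zero]
    by_cases hne : (F ⁻¹' Iic t).Nonempty
    · -- S nonempty, bounded above
      obtain ⟨b, hb⟩ : ∃ b, t < F b := by
        have := htop.eventually (eventually_gt_nhds ht1 : ∀ᶠ y in 𝓝 (1:ℝ), t < y)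
        exact this.exists
      have hbdd : BddAbove (F ⁻¹' Iic t) := by
        refine ⟨b, fun y hy => ?_⟩
        by_contra hyb
        push_neg at hyb
        exact absurd (le_trans (hmono hyb.le) hy) (not_le.mpr hb)
      have hclosed : IsClosed (F ⁻¹' Iic t) := isClosed_Iic.preimage hF
      set a := sSup (F ⁻¹' Iic t) with ha
      have haS : a ∈ F ⁻¹' Iic t := hclosed.csSup_mem hne hbdd
      have hFa_le : F a ≤ t := haS
      have hFa_ge : t ≤ F a := by
        have htend : Tendsto F (𝓝[>] a) (𝓝 (F a)) :=
          (hF.tendsto a).mono_left nhdsWithin_le_nhds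
        refine ge_of_tendsto htend ?_
        filter_upwards [self_mem_nhdsWithin] with x hx
        by_contra hcon
        push_neg at hcon
        exact absurd (le_csSup hbdd hcon.le) (not_le.mpr hx)
      have hFa : F a = t := le_antisymm hFa_le hFa_ge
      have hSa : F ⁻¹' Iic t = Iic a := by
        ext x
        constructor
        · intro hx; exact le_csSup hbdd hx
        · intro hx; exact le_trans (hmono hx) hFa_le
      rw [hpre, hSa]
      have : P (X ⁻¹' Iic a) = ENNReal.ofReal t := by
        have h3 : (P {ω | X ω ≤ a}).toReal = t := by rw [← hcdf a, hFa]
        have h4 : P {ω | X ω ≤ a} ≠ ⊤ := measure_ne_top _ _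
        rw [show X ⁻¹' Iic a = {ω | X ω ≤ a} from rfl, ← h3, ENNReal.ofReal_toReal h4]
      exact this
    · -- S empty: then t ≤ 0, so t = 0
      have hSempty : F ⁻¹' Iic t = ∅ := not_nonempty_iff_eq_empty.mp hne
      have ht0' : t ≤ 0 := by
        by_contra hcon
        push_neg at hcon
        have := hbot.eventually (eventually_lt_nhds hcon : ∀ᶠ y in 𝓝 (0:ℝ), y < t)
        obtain ⟨x, hx⟩ := this.exists
        have hmem : x ∈ F ⁻¹' Iic t := hx.le
        rw [hSempty] at hmem
        exact hmem
      have : t = 0 := le_antisymm ht0' ht0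
      rw [hpre, hSempty, this]
      simp
end

section
/- The entropic risk measure admits the dual (variational) representation: for bounded X, (1/γ) log E_ℙ[exp(−γX)] = sup over probability measures Q absolutely continuous w.r.t. ℙ of ( E_Q[−X] − (1/γ) H(Q|ℙ) ), where H(Q|ℙ) = E_Q[log(dQ/dℙ)] is the relative entropy. -/
open MeasureTheory Real

/-- Nonnegativity of relative entropy (Gibbs' inequality). -/
lemma aux_integral_llr_nonneg {Ω : Type*} [MeasurableSpace Ω] {μ ν : Measure Ω}
    [IsProbabilityMeasure μ] [IsProbabilityMeasure ν] (hμν : μ ≪ ν)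
    (h : Integrable (llr μ ν) μ) : 0 ≤ ∫ x, llr μ ν x ∂μ := by
  have hint : Integrable (fun x ↦ (ν.rnDeriv μ x).toReal - 1) μ :=
    Measure.integrable_toReal_rnDeriv.sub (integrable_const 1)
  have hae : ∀ᵐ x ∂μ, -llr μ ν x ≤ (ν.rnDeriv μ x).toReal - 1 := by
    filter_upwards [Measure.rnDeriv_pos hμν, hμν.ae_le (Measure.rnDeriv_lt_top μ ν),
      Measure.inv_rnDeriv hμν] with x h1 h2 h3
    have hr : 0 < (μ.rnDeriv ν x).toReal := ENNReal.toReal_pos h1.ne' h2.ne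
    have hlog := Real.log_le_sub_one_of_pos (inv_pos.mpr hr)
    rw [Real.log_inv] at hlog
    have h4 : (μ.rnDeriv ν x).toReal⁻¹ = (ν.rnDeriv μ x).toReal := by
      rw [← ENNReal.toReal_inv, ← h3, Pi.inv_apply]
    rw [llr_def]
    linarith [h4 ▸ hlog]
  have hmono : ∫ x, -llr μ ν x ∂μ ≤ ∫ x, ((ν.rnDeriv μ x).toReal - 1) ∂μ :=
    integral_mono_ae h.neg hint hae
  rw [integral_neg] at hmono
  have hle : ∫ x, ((ν.rnDeriv μ x).toReal - 1) ∂μ ≤ 0 := by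
    rw [integral_sub Measure.integrable_toReal_rnDeriv (integrable_const 1)]
    simp only [integral_const, measure_univ, ENNReal.toReal_one, smul_eq_mul, one_mul]
    have := Measure.integral_toReal_rnDeriv' (μ := ν) (ν := μ)
    rw [this]
    have h1 : ν.real Set.univ = 1 := by simp
    have h2 : (0:ℝ) ≤ (ν.singularPart μ).real Set.univ := measureReal_nonneg
    have h0 : μ.real Set.univ = 1 := by simp
    linarith
  linarith

/-- Dual (variational) representation of the entropic risk measure: for bounded `X`,
`(1/γ) log E_P[exp(−γX)] = sup_{Q ≪ P} ( E_Q[−X] − (1/γ) H(Q|P) )`, where the relative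
entropy is `H(Q|P) = E_Q[log(dQ/dP)]` (the supremum being over probability measures `Q`
absolutely continuous w.r.t. `P` with finite relative entropy). -/
theorem entropic_risk_measure_dual {Ω : Type*} [MeasurableSpace Ω] (P : Measure Ω)
    [IsProbabilityMeasure P] (X : Ω → ℝ) (hX : Measurable X) (C : ℝ) (hbd : ∀ ω, |X ω| ≤ C)
    (γ : ℝ) (hγ : 0 < γ) :
    (1 / γ) * Real.log (∫ ω, Real.exp (-γ * X ω) ∂P)
      = sSup {r : ℝ | ∃ Q : Measure Ω, IsProbabilityMeasure Q ∧ Q ≪ P ∧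
          Integrable (llr Q P) Q ∧
          r = (∫ ω, -X ω ∂Q) - (1 / γ) * ∫ ω, llr Q P ω ∂Q} := by
  set f : Ω → ℝ := fun ω ↦ -γ * X ω with hf_def
  have hf_meas : Measurable f := hX.const_mul (-γ)
  have hf_bd : ∀ ω, |f ω| ≤ γ * C := by
    intro ω
    rw [hf_def]
    calc |(-γ) * X ω| = γ * |X ω| := by rw [abs_mul, abs_neg, abs_of_pos hγ]
    _ ≤ γ * C := by exact mul_le_mul_of_nonneg_left (hbd ω) hγ.le
  -- integrability of bounded measurable functions w.r.t. any finite measure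
  have hint_of : ∀ (Q : Measure Ω), IsProbabilityMeasure Q → Integrable X Q := by
    intro Q hQ
    exact Integrable.mono' (integrable_const C) hX.aestronglyMeasurable
      (Filter.Eventually.of_forall fun ω ↦ hbd ω)
  have hfint_of : ∀ (Q : Measure Ω), IsProbabilityMeasure Q → Integrable f Q := by
    intro Q hQ
    exact Integrable.mono' (integrable_const (γ * C)) hf_meas.aestronglyMeasurable
      (Filter.Eventually.of_forall fun ω ↦ hf_bd ω)
  have hfexp : Integrable (fun ω ↦ Real.exp (f ω)) P := by
    refine Integrable.mono' (integrable_const (Real.exp (γ * C)))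
      (hf_meas.exp).aestronglyMeasurable (Filter.Eventually.of_forall fun ω ↦ ?_)
    rw [Real.norm_eq_abs, abs_of_pos (Real.exp_pos _)]
    exact Real.exp_le_exp.mpr ((le_abs_self _).trans (hf_bd ω))
  set Z : ℝ := ∫ ω, Real.exp (f ω) ∂P with hZ_def
  have hZ_pos : 0 < Z := integral_exp_pos hfexp
  -- the tilted measure
  set Qs : Measure Ω := P.tilted f with hQs_def
  have hQs_prob : IsProbabilityMeasure Qs := isProbabilityMeasure_tilted hfexp
  have hQs_ac : Qs ≪ P := tilted_absolutelyContinuous P f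
  have hP_ac_Qs : P ≪ Qs := absolutelyContinuous_tilted hfexp
  -- llr of tilted measure
  have hllr_Qs : llr Qs P =ᵐ[Qs] fun ω ↦ f ω - Real.log Z := by
    have h1 : llr Qs P =ᵐ[P] fun ω ↦ f ω - Real.log Z + llr P P ω :=
      llr_tilted_left P.absolutelyContinuous_refl hfexp hf_meas.aemeasurable
    have h2 : llr P P =ᵐ[P] fun _ ↦ 0 := by
      filter_upwards [Measure.rnDeriv_self P] with x hx
      simp [llr_def, hx]
    have h3 : llr Qs P =ᵐ[P] fun ω ↦ f ω - Real.log Z := by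
      filter_upwards [h1, h2] with x hx1 hx2
      rw [hx1, hx2, add_zero]
    exact hQs_ac.ae_le h3
  have hllr_Qs_int : Integrable (llr Qs P) Qs :=
    (integrable_congr hllr_Qs.symm).mp ((hfint_of Qs hQs_prob).sub (integrable_const _))
  have hllr_Qs_integral : ∫ ω, llr Qs P ω ∂Qs = ∫ ω, f ω ∂Qs - Real.log Z := by
    rw [integral_congr_ae hllr_Qs,
      integral_sub (hfint_of Qs hQs_prob) (integrable_const _)]
    simp
  -- the Gibbs upper bound
  have hub : ∀ r ∈ {r : ℝ | ∃ Q : Measure Ω, IsProbabilityMeasure Q ∧ Q ≪ P ∧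
      Integrable (llr Q P) Q ∧
      r = (∫ ω, -X ω ∂Q) - (1 / γ) * ∫ ω, llr Q P ω ∂Q},
      r ≤ (1 / γ) * Real.log Z := by
    rintro r ⟨Q, hQ, hQP, hQint, rfl⟩
    have hQQs : Q ≪ Qs := hQP.trans hP_ac_Qs
    have hllr_QQs_int : Integrable (llr Q Qs) Q :=
      integrable_llr_tilted_right hQP (hfint_of Q hQ) hQint hfexp
    have heq : ∫ ω, llr Q Qs ω ∂Q
        = ∫ ω, llr Q P ω ∂Q - ∫ ω, f ω ∂Q + Real.log Z :=
      integral_llr_tilted_right hQP (hfint_of Q hQ) hfexp hQint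
    have hnn : 0 ≤ ∫ ω, llr Q Qs ω ∂Q := aux_integral_llr_nonneg hQQs hllr_QQs_int
    have hfQ : ∫ ω, f ω ∂Q = -γ * ∫ ω, X ω ∂Q := integral_const_mul (-γ) X
    have hXQ : ∫ ω, -X ω ∂Q = -∫ ω, X ω ∂Q := integral_neg X
    rw [heq, hfQ] at hnn
    rw [hXQ]
    set IX := ∫ ω, X ω ∂Q
    set IL := ∫ ω, llr Q P ω ∂Q
    have goalγ : γ * (-IX - 1 / γ * IL) ≤ γ * (1 / γ * Real.log Z) := by
      have e1 : γ * (-IX - 1 / γ * IL) = -γ * IX - IL := by field_simp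
      have e2 : γ * (1 / γ * Real.log Z) = Real.log Z := by field_simp
      rw [e1, e2]
      linarith
    exact le_of_mul_le_mul_left goalγ hγ
  -- membership of the tilted value
  have hmem : (1 / γ) * Real.log Z ∈ {r : ℝ | ∃ Q : Measure Ω, IsProbabilityMeasure Q ∧ Q ≪ P ∧
      Integrable (llr Q P) Q ∧
      r = (∫ ω, -X ω ∂Q) - (1 / γ) * ∫ ω, llr Q P ω ∂Q} := by
    refine ⟨Qs, hQs_prob, hQs_ac, hllr_Qs_int, ?_⟩
    rw [hllr_Qs_integral, integral_neg]
    have hfQs : ∫ ω, f ω ∂Qs = -γ * ∫ ω, X ω ∂Qs := integral_const_mul (-γ) X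
    rw [hfQs]
    field_simp
    ring
  exact le_antisymm (le_csSup ⟨(1 / γ) * Real.log Z, hub⟩ hmem) (csSup_le ⟨_, hmem⟩ hub)
end
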